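/- Let C be a set of constraints over a finite set A such that R(C) ≠ ∅. Then: (i) there exists z ∈ A such that no constraint of C has z as its first component; (ii) for any such z, the restricted constraint set C' = {(z', S) ∈ C : z ∉ S}, viewed as a set of constraints over A ∖ {z}, satisfies R(C') ≠ ∅; and (iii) for every linear order ≻' on A ∖ {z} satisfying all constraints of C', the linear order on A obtained from ≻' by placing z last satisfies all constraints of C. -/

import Mathlib

/-- A linear order on a finite set, represented as a duplicate-free list `l` covering
the set, satisfies the constraint `c = (z, S)` ("`z` must precede at least one element
of `S`") if `z` appears before some `s ∈ S` in `l`. -/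
def SatC {A : Type} [DecidableEq A] (l : List A) (c : A × Finset A) : Prop :=
  ∃ s ∈ c.2, l.idxOf c.1 < l.idxOf s

open List
lemma pair_sublist_of_indexOf_lt {A : Type} [DecidableEq A] {l : List A} {a b : A}
    (hb : b ∈ l) (h : l.idxOf a < l.idxOf b) : [a, b] <+ l := by
  induction l with
  | nil => simp at hb
  | cons c t ih =>
    by_cases hbc : b = c
    · subst hbc
      simp [List.idxOf_cons_self] at h
    · have hbt : b ∈ t := by
        rcases List.mem_cons.mp hb with h1 | h1
        · exact absurd h1 hbc
        · exact h1
      by_cases hac : a = c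
      · subst hac
        exact (List.singleton_sublist.mpr hbt).cons_cons a
      · rw [List.idxOf_cons_ne _ (Ne.symm hac), List.idxOf_cons_ne _ (Ne.symm hbc)] at h
        exact (ih hbt (Nat.succ_lt_succ_iff.mp h)).cons c

lemma indexOf_lt_of_pair_sublist {A : Type} [DecidableEq A] {l : List A} {a b : A}
    (hn : l.Nodup) (h : [a, b] <+ l) : l.idxOf a < l.idxOf b := by
  induction l with
  | nil => cases h
  | cons c t ih =>
    rcases List.nodup_cons.mp hn with ⟨hct, hnt⟩
    cases h with
    | cons _ h' =>
      have ha : a ∈ t := h'.subset (by simp)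
      have hb : b ∈ t := h'.subset (by simp)
      rw [List.idxOf_cons_ne _ (by rintro rfl; exact hct ha),
        List.idxOf_cons_ne _ (by rintro rfl; exact hct hb)]
      exact Nat.succ_lt_succ (ih hnt h')
    | cons_cons _ h' =>
      have hb : b ∈ t := h'.subset (by simp)
      rw [List.idxOf_cons_self, List.idxOf_cons_ne _ (by rintro rfl; exact hct hb)]
      exact Nat.succ_pos _

/-- let `C` be a set of constraints over a finite set `A` (each
constraint `(z, S)` having `S` nonempty and `z ∉ S`) such that some linear order on
`A` satisfies all constraints of `C`.  Then:
(i) there is a `z ∈ A` appearing as the first component of no constraint of `C`;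
(ii) for any such `z`, the restricted constraint set `C' = {(z',S) ∈ C : z ∉ S}`,
viewed over `A ∖ {z}`, is satisfiable by some linear order on `A ∖ {z}`; and
(iii) for every linear order `l'` on `A ∖ {z}` satisfying all constraints of `C'`,
the linear order `l' ++ [z]` on `A` (placing `z` last) satisfies all constraints
of `C`. -/
theorem stmt9 {A : Type} [Fintype A] [DecidableEq A] [Nonempty A]
    (C : Set (A × Finset A))
    (hC : ∀ c ∈ C, c.2.Nonempty ∧ c.1 ∉ c.2)
    (hR : ∃ l : List A, l.Nodup ∧ l.toFinset = Finset.univ ∧ ∀ c ∈ C, SatC l c) :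
    (∃ z : A, ∀ S : Finset A, (z, S) ∉ C) ∧
    (∀ z : A, (∀ S : Finset A, (z, S) ∉ C) →
      (∃ l' : List A, l'.Nodup ∧ l'.toFinset = Finset.univ.erase z ∧
        ∀ c ∈ C, z ∉ c.2 → SatC l' c) ∧
      (∀ l' : List A, l'.Nodup → l'.toFinset = Finset.univ.erase z →
        (∀ c ∈ C, z ∉ c.2 → SatC l' c) →
        (l' ++ [z]).Nodup ∧ (l' ++ [z]).toFinset = Finset.univ ∧
          ∀ c ∈ C, SatC (l' ++ [z]) c)) := by
  obtain ⟨l, hnd, hcov, hsat⟩ := hR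
  have hmem : ∀ a : A, a ∈ l := fun a => by
    rw [← List.mem_toFinset, hcov]; exact Finset.mem_univ a
  constructor
  · -- (i)
    obtain ⟨z, _, hz⟩ := Finset.exists_max_image (Finset.univ : Finset A)
      (fun a => l.idxOf a) Finset.univ_nonempty
    refine ⟨z, fun S hzS => ?_⟩
    obtain ⟨s, _, hlt⟩ := hsat (z, S) hzS
    simp only at hlt
    exact absurd (hz s (Finset.mem_univ s)) (by omega)
  · -- (ii) and (iii)
    intro z hz
    constructor
    · -- (ii)
      refine ⟨l.erase z, hnd.erase z, ?_, ?_⟩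
      · ext a
        simp only [List.mem_toFinset, hnd.mem_erase_iff, Finset.mem_erase, ← hcov,
          List.mem_toFinset]
      · intro c hc hzc
        obtain ⟨s, hs, hlt⟩ := hsat c hc
        have hc1z : c.1 ≠ z := fun h => hz c.2 (by rw [← h]; exact hc)
        have hsz : s ≠ z := fun h => hzc (h ▸ hs)
        refine ⟨s, hs, indexOf_lt_of_pair_sublist (hnd.erase z) ?_⟩
        have hsub : [c.1, s] <+ l := pair_sublist_of_indexOf_lt (hmem s) hlt
        have := hsub.erase z
        rwa [List.erase_of_not_mem (fun hm => by
          rcases List.mem_cons.mp hm with h | h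
          · exact hc1z h.symm
          · simp only [List.mem_singleton] at h
            exact hsz h.symm)] at this
    · -- (iii)
      intro l' hnd' hcov' hsat'
      have hzl' : z ∉ l' := fun h => by
        have := List.mem_toFinset.mpr h
        rw [hcov'] at this
        exact (Finset.mem_erase.mp this).1 rfl
      have hmem' : ∀ a : A, a ≠ z → a ∈ l' := fun a ha => by
        rw [← List.mem_toFinset, hcov', Finset.mem_erase]
        exact ⟨ha, Finset.mem_univ a⟩
      refine ⟨?_, ?_, ?_⟩
      · rw [List.nodup_append]
        refine ⟨hnd', List.nodup_singleton z, ?_⟩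
        intro a ha b hb
        simp only [List.mem_singleton] at hb
        exact fun hab => hzl' (hb ▸ hab ▸ ha)
      · ext a
        simp only [List.toFinset_append, Finset.mem_union, List.mem_toFinset, hcov']
        by_cases haz : a = z <;> simp [haz]
      · intro c hc
        have hc1z : c.1 ≠ z := fun h => hz c.2 (by rw [← h]; exact hc)
        have hc1l' : c.1 ∈ l' := hmem' c.1 hc1z
        have hidx1 : (l' ++ [z]).idxOf c.1 = l'.idxOf c.1 :=
          List.idxOf_append_of_mem hc1l'
        by_cases hzc : z ∈ c.2
        · refine ⟨z, hzc, ?_⟩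
          rw [hidx1, List.idxOf_append_of_notMem hzl']
          simp only [List.idxOf_cons_self, Nat.add_zero]
          exact List.idxOf_lt_length_iff.mpr hc1l'
        · obtain ⟨s, hs, hlt⟩ := hsat' c hc hzc
          refine ⟨s, hs, ?_⟩
          rw [hidx1]
          by_cases hsl' : s ∈ l'
          · rwa [List.idxOf_append_of_mem hsl']
          · rw [List.idxOf_append_of_notMem hsl']
            have : l'.idxOf s = l'.length := by
              by_contra h
              exact hsl' (List.idxOf_lt_length_iff.mp
                (lt_of_le_of_ne (List.idxOf_le_length) h))
            omega
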